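/- Switch structure of the optimal multicast policy in the uniform case (Theorem 1 of the paper): let V : 𝒬 → ℝ be monotone. If content u minimizes the state-action cost at state Q, i.e., J_V(Q, u) ≤ J_V(Q, v) for all v ∈ Fin M, and Q u < N u, then u still minimizes the state-action cost at Q + e_u, i.e., J_V(Q + e_u, u) ≤ J_V(Q + e_u, v) for all v ∈ Fin M. Consequently, for fixed values of the other queues, the set of queue lengths Q_u at which content u is optimal is upward closed (a threshold/switch structure). -/

import Mathlib

open Finset

/-- State space of the uniform-channel multicast MDP: request queue vectors capped by `N`. -/
def QSpace (M : ℕ) (N : Fin M → ℕ) : Type :=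
  {Q : Fin M → ℕ // ∀ m, Q m ≤ N m}

/-- Next state when content `u` is multicast in state `Q` and arrival `a` occurs. -/
def nextQ {M : ℕ} {N : Fin M → ℕ} (Q : QSpace M N) (u : Fin M) (a : Fin M → ℕ) :
    QSpace M N :=
  ⟨fun m => min ((if m = u then 0 else Q.1 m) + a m) (N m), fun _ => min_le_right _ _⟩

/-- Per-stage cost in the uniform case. -/
noncomputable def gCost {M : ℕ} {N : Fin M → ℕ} (wp wf : ℝ) (p f : Fin M → ℝ)
    (Q : QSpace M N) (u : Fin M) : ℝ :=
  (∑ m, (Q.1 m : ℝ)) + wp * p u + wf * f u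

/-- State-action cost function `J_V(Q,u)`. -/
noncomputable def JCost {M : ℕ} {N : Fin M → ℕ} (𝒜 : Finset (Fin M → ℕ))
    (ρ : (Fin M → ℕ) → ℝ) (wp wf : ℝ) (p f : Fin M → ℝ)
    (V : QSpace M N → ℝ) (Q : QSpace M N) (u : Fin M) : ℝ :=
  gCost wp wf p f Q u + ∑ a ∈ 𝒜, ρ a * V (nextQ Q u a)

/-- The state `Q + e_u`: component `u` is increased by 1 (requires `Q u < N u`). -/
def addE {M : ℕ} {N : Fin M → ℕ} (Q : QSpace M N) (u : Fin M) (h : Q.1 u < N u) :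
    QSpace M N :=
  ⟨Function.update Q.1 u (Q.1 u + 1), by
    intro m
    rcases eq_or_ne m u with rfl | hm
    · simp only [Function.update_self]; exact h
    · simp only [Function.update_of_ne hm]; exact Q.2 m⟩

/-- Switch structure of the optimal policy in the uniform case (Theorem 1): if a
monotone value function `V` is such that content `u` minimizes the state-action cost
at `Q`, then `u` still minimizes the state-action cost at `Q + e_u`. -/
theorem optimal_policy_switch_structure
    {M : ℕ} (hM : 1 ≤ M) (N : Fin M → ℕ)
    (𝒜 : Finset (Fin M → ℕ)) (ρ : (Fin M → ℕ) → ℝ)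
    (hρ0 : ∀ a ∈ 𝒜, 0 ≤ ρ a) (hρ1 : ∑ a ∈ 𝒜, ρ a = 1)
    (wp wf : ℝ) (p f : Fin M → ℝ)
    (V : QSpace M N → ℝ)
    (hV : ∀ Q₁ Q₂ : QSpace M N, Q₁.1 ≤ Q₂.1 → V Q₁ ≤ V Q₂) :
    ∀ (Q : QSpace M N) (u : Fin M) (h : Q.1 u < N u),
      (∀ v : Fin M, JCost 𝒜 ρ wp wf p f V Q u ≤ JCost 𝒜 ρ wp wf p f V Q v) →
      ∀ v : Fin M,
        JCost 𝒜 ρ wp wf p f V (addE Q u h) u ≤ JCost 𝒜 ρ wp wf p f V (addE Q u h) v := by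
  intro Q u h hmin v
  have hEq : ∀ a, nextQ (addE Q u h) u a = nextQ Q u a := by
    intro a
    apply Subtype.ext
    funext m
    simp only [nextQ, addE]
    rcases eq_or_ne m u with rfl | hm
    · simp
    · simp [hm, Function.update_of_ne hm]
  have hle : ∀ a, (nextQ Q v a).1 ≤ (nextQ (addE Q u h) v a).1 := by
    intro a m
    simp only [nextQ, addE]
    apply min_le_min _ le_rfl
    apply Nat.add_le_add_right
    rcases eq_or_ne m v with rfl | hm
    · simp
    · simp only [if_neg hm]
      rcases eq_or_ne m u with rfl | hmu
      · simp
      · simp [Function.update_of_ne hmu]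
  have hg : ∀ w, gCost (N := N) wp wf p f (addE Q u h) w = gCost wp wf p f Q w + 1 := by
    intro w
    simp only [gCost, addE]
    have hpt : ∀ m, (((Function.update Q.1 u (Q.1 u + 1)) m : ℕ) : ℝ)
        = (Q.1 m : ℝ) + if m = u then 1 else 0 := by
      intro m
      rcases eq_or_ne m u with rfl | hm
      · simp
      · simp [Function.update_of_ne hm, hm]
    rw [Finset.sum_congr rfl fun m _ => hpt m, Finset.sum_add_distrib,
      Finset.sum_ite_eq' Finset.univ u (fun _ => (1:ℝ)), if_pos (Finset.mem_univ u)]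
    ring
  unfold JCost
  rw [hg, hg]
  have h1 : ∑ a ∈ 𝒜, ρ a * V (nextQ (addE Q u h) u a) = ∑ a ∈ 𝒜, ρ a * V (nextQ Q u a) :=
    Finset.sum_congr rfl fun a _ => by rw [hEq]
  have h2 : ∑ a ∈ 𝒜, ρ a * V (nextQ Q v a) ≤ ∑ a ∈ 𝒜, ρ a * V (nextQ (addE Q u h) v a) :=
    Finset.sum_le_sum fun a ha => mul_le_mul_of_nonneg_left (hV _ _ (hle a)) (hρ0 a ha)
  have hm := hmin v
  unfold JCost at hm
  linarith
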